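/- Let G be a finite Abelian group such that every subgroup of G has the semi-Hajós property. Then every kaleidoscopical configuration K ⊆ G (with respect to the regular action of G on itself) is splittable. -/

import Mathlib

open Pointwise

universe u v

/-- `H = AB` is a factorization of the group `H`. -/
def IsFactorization {H : Type v} [Group H] (A B : Set H) : Prop :=
  Function.Bijective (fun p : A × B => (p.1 : H) * (p.2 : H))

/-- `A ⊆ H` is periodic: `hA = A` for some non-identity `h ∈ H`. -/
def IsPeriodic {H : Type v} [Group H] (A : Set H) : Prop :=
  ∃ h : H, h ≠ 1 ∧ h • A = A

/-- An Abelian group `H` has the semi-Hajós property if every complemented proper subset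
`A ⊊ H` either is periodic or has a periodic complementer factor. -/
def SemiHajosGroup (H : Type v) [Group H] : Prop :=
  ∀ A : Set H, A ≠ Set.univ → (∃ B : Set H, IsFactorization A B) →
    (IsPeriodic A ∨ ∃ B : Set H, IsFactorization A B ∧ IsPeriodic B)

/-- An equivalence relation `E` on `G` is `G`-invariant (for the regular action). -/
def SetoidInvariant {G : Type u} [Group G] (E : Setoid G) : Prop :=
  ∀ (g x y : G), E.r x y → E.r (g * x) (g * y)

/-- `K` is a kaleidoscopical configuration in the group `G` with the regular action. -/
def Kaleidoscopical {G : Type u} [Group G] (K : Set G) : Prop :=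
  ∃ (C : Type u) (χ : G → C), Function.Surjective χ ∧
    ∀ g : G, Set.BijOn χ (g • K) Set.univ

/-- `K` is `F/E`-parallel: `[K]_E ∩ [x]_F = [x]_F` for all `x ∈ K`. -/
def ParallelRel {G : Type u} (K : Set G) (E F : Setoid G) : Prop :=
  ∀ x ∈ K, {y | ∃ k ∈ K, E.r k y} ∩ {y | F.r x y} = {y | F.r x y}

/-- `K` is `F/E`-orthogonal: `[K]_E ∩ [x]_F = [x]_E` for all `x ∈ K`. -/
def OrthogonalRel {G : Type u} (K : Set G) (E F : Setoid G) : Prop :=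
  ∀ x ∈ K, {y | ∃ k ∈ K, E.r k y} ∩ {y | F.r x y} = {y | E.r x y}

/-- `K ⊆ G` is splittable: there is an increasing chain
`Δ_G = E_0 ⊆ E_1 ⊆ … ⊆ E_m = G × G` of `G`-invariant equivalence relations such that for
every `i < m` the set `K` is `E_{i+1}/E_i`-parallel or `E_{i+1}/E_i`-orthogonal. -/
def Splittable {G : Type u} [Group G] (K : Set G) : Prop :=
  ∃ (m : ℕ) (E : Fin (m + 1) → Setoid G), Monotone E ∧ E 0 = ⊥ ∧ E (Fin.last m) = ⊤ ∧
    (∀ i, SetoidInvariant (E i)) ∧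
    ∀ i : Fin m, ParallelRel K (E i.castSucc) (E i.succ) ∨
      OrthogonalRel K (E i.castSucc) (E i.succ)

section Helpers

variable {H : Type v} [Group H]

lemma isFactorization_iff {A B : Set H} :
    IsFactorization A B ↔
      (∀ g : H, ∃ a ∈ A, ∃ b ∈ B, a * b = g) ∧
      (∀ a ∈ A, ∀ b ∈ B, ∀ a' ∈ A, ∀ b' ∈ B, a * b = a' * b' → a = a' ∧ b = b') := by
  constructor
  · rintro ⟨hinj, hsurj⟩
    constructor
    · intro g
      obtain ⟨⟨⟨a, ha⟩, ⟨b, hb⟩⟩, h⟩ := hsurj g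
      exact ⟨a, ha, b, hb, h⟩
    · intro a ha b hb a' ha' b' hb' hab
      have := hinj (a₁ := (⟨a, ha⟩, ⟨b, hb⟩)) (a₂ := (⟨a', ha'⟩, ⟨b', hb'⟩)) hab
      rw [Prod.ext_iff, Subtype.ext_iff, Subtype.ext_iff] at this
      exact this
  · rintro ⟨hsurj, hinj⟩
    constructor
    · rintro ⟨⟨a, ha⟩, ⟨b, hb⟩⟩ ⟨⟨a', ha'⟩, ⟨b', hb'⟩⟩ hab
      obtain ⟨h1, h2⟩ := hinj a ha b hb a' ha' b' hb' hab
      simp [Prod.ext_iff, Subtype.ext_iff, h1, h2]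
    · intro g
      obtain ⟨a, ha, b, hb, h⟩ := hsurj g
      exact ⟨(⟨a, ha⟩, ⟨b, hb⟩), h⟩

lemma IsFactorization.nonempty_left {A B : Set H} (h : IsFactorization A B) : A.Nonempty := by
  obtain ⟨a, ha, -⟩ := (isFactorization_iff.mp h).1 1
  exact ⟨a, ha⟩

lemma IsFactorization.nonempty_right {A B : Set H} (h : IsFactorization A B) : B.Nonempty := by
  obtain ⟨a, -, b, hb, -⟩ := (isFactorization_iff.mp h).1 1
  exact ⟨b, hb⟩

variable {H' : Type v} [Group H']

lemma IsFactorization.image (e : H ≃* H') {A B : Set H} (hf : IsFactorization A B) :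
    IsFactorization (e '' A) (e '' B) := by
  rw [isFactorization_iff] at hf ⊢
  obtain ⟨hsurj, hinj⟩ := hf
  constructor
  · intro g
    obtain ⟨a, ha, b, hb, h⟩ := hsurj (e.symm g)
    exact ⟨e a, ⟨a, ha, rfl⟩, e b, ⟨b, hb, rfl⟩, by
      rw [← map_mul, h, MulEquiv.apply_symm_apply]⟩
  · rintro _ ⟨a, ha, rfl⟩ _ ⟨b, hb, rfl⟩ _ ⟨a', ha', rfl⟩ _ ⟨b', hb', rfl⟩ hab
    rw [← map_mul, ← map_mul] at hab
    obtain ⟨h1, h2⟩ := hinj a ha b hb a' ha' b' hb' (e.injective hab)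
    exact ⟨congrArg e h1, congrArg e h2⟩

lemma IsPeriodic.image (e : H ≃* H') {A : Set H} (hp : IsPeriodic A) :
    IsPeriodic (e '' A) := by
  obtain ⟨h, hne, hA⟩ := hp
  refine ⟨e h, by simpa using hne, ?_⟩
  have : e h • (e '' A) = e '' (h • A) := by
    ext x
    simp only [Set.mem_smul_set, Set.mem_image]
    constructor
    · rintro ⟨_, ⟨a, ha, rfl⟩, rfl⟩
      exact ⟨h * a, ⟨a, ha, rfl⟩, by simp [smul_eq_mul, map_mul]⟩
    · rintro ⟨_, ⟨a, ha, rfl⟩, rfl⟩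
      exact ⟨e a, ⟨a, ha, rfl⟩, by simp [smul_eq_mul, map_mul]⟩
  rw [this, hA]

lemma SemiHajosGroup.congr (e : H ≃* H') (h : SemiHajosGroup H) : SemiHajosGroup H' := by
  intro A' hne ⟨B', hfac⟩
  have himg : e '' (e.symm '' A') = A' := by
    rw [Set.image_image]; simp
  have hAne : e.symm '' A' ≠ Set.univ := by
    intro hcon
    apply hne
    rw [← himg, hcon, Set.image_univ]
    exact e.surjective.range_eq
  have hfac' : IsFactorization (e.symm '' A') (e.symm '' B') := hfac.image e.symm
  rcases h (e.symm '' A') hAne ⟨_, hfac'⟩ with hper | ⟨B₂, hB₂fac, hB₂per⟩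
  · left
    have := hper.image e
    rwa [himg] at this
  · right
    refine ⟨e '' B₂, ?_, hB₂per.image e⟩
    have := hB₂fac.image e
    rwa [himg] at this

end Helpers

section Kaleido

variable {G : Type u} [CommGroup G]

lemma Kaleidoscopical.exists_factorization {K : Set G} (hK : Kaleidoscopical K) :
    ∃ B : Set G, IsFactorization K B := by
  obtain ⟨C, χ, hsurj, hbij⟩ := hK
  set c : C := χ 1 with hc
  have hex : ∀ x : G, ∃ k ∈ K, χ (x * k) = c := by
    intro x
    have h1 := (hbij x).2.2 (Set.mem_univ c)
    obtain ⟨y, hy, hyc⟩ := h1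
    obtain ⟨k, hk, rfl⟩ := hy
    exact ⟨k, hk, hyc⟩
  have huniq : ∀ x : G, ∀ k ∈ K, ∀ k' ∈ K, χ (x * k) = χ (x * k') → k = k' := by
    intro x k hk k' hk' hkk
    have h1 : x * k ∈ x • K := ⟨k, hk, rfl⟩
    have h2 : x * k' ∈ x • K := ⟨k', hk', rfl⟩
    have := (hbij x).2.1 h1 h2 hkk
    exact mul_left_cancel this
  refine ⟨(fun t => t⁻¹) '' (χ ⁻¹' {c}), ?_⟩
  rw [isFactorization_iff]
  constructor
  · intro g
    obtain ⟨k, hk, hkc⟩ := hex g⁻¹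
    refine ⟨k, hk, (g⁻¹ * k)⁻¹, ⟨g⁻¹ * k, hkc, rfl⟩, ?_⟩
    group
  · rintro k hk _ ⟨t, ht, rfl⟩ k' hk' _ ⟨t', ht', rfl⟩ heq
    have hy : t = (k * t⁻¹)⁻¹ * k := by group
    have hy' : t' = (k * t⁻¹)⁻¹ * k' := by
      rw [heq]; group
    have hkk : k = k' := by
      apply huniq (k * t⁻¹)⁻¹ k hk k' hk'
      rw [← hy, ← hy']
      rw [Set.mem_preimage, Set.mem_singleton_iff] at ht ht'
      rw [ht, ht']
    refine ⟨hkk, ?_⟩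
    have : t = t' := by
      rw [hy, hy', hkk]
    rw [this]
  
end Kaleido

section SetoidLemmas

variable {G Q : Type u}

lemma setoid_comap_mono (f : G → Q) {E F : Setoid Q} (h : E ≤ F) :
    Setoid.comap f E ≤ Setoid.comap f F := by
  rw [Setoid.le_def] at h ⊢
  intro x y hxy
  exact h hxy

lemma setoid_comap_top (f : G → Q) : Setoid.comap f (⊤ : Setoid Q) = ⊤ := by
  apply Setoid.ext
  intro x y
  simp [Setoid.comap_rel, Setoid.top_def]

lemma parallelRel_comap (f : G → Q) (K : Set G) (E F : Setoid Q)
    (h : ParallelRel (f '' K) E F) : ParallelRel K (E.comap f) (F.comap f) := by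
  intro x hx
  ext y
  simp only [Set.mem_inter_iff, Set.mem_setOf_eq]
  constructor
  · rintro ⟨-, hF⟩
    exact hF
  · intro hF
    refine ⟨?_, hF⟩
    have hy : f y ∈ {z | ∃ k ∈ f '' K, E.r k z} ∩ {z | F.r (f x) z} := by
      rw [h (f x) ⟨x, hx, rfl⟩]
      exact hF
    obtain ⟨⟨k, ⟨k₀, hk₀, rfl⟩, hE⟩, -⟩ := hy
    exact ⟨k₀, hk₀, hE⟩

lemma orthogonalRel_comap (f : G → Q) (K : Set G) (E F : Setoid Q)
    (h : OrthogonalRel (f '' K) E F) : OrthogonalRel K (E.comap f) (F.comap f) := by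
  intro x hx
  have hfx := h (f x) ⟨x, hx, rfl⟩
  ext y
  simp only [Set.mem_inter_iff, Set.mem_setOf_eq]
  constructor
  · rintro ⟨⟨k, hk, hE⟩, hF⟩
    have hy : f y ∈ {z | ∃ k ∈ f '' K, E.r k z} ∩ {z | F.r (f x) z} :=
      ⟨⟨f k, ⟨k, hk, rfl⟩, hE⟩, hF⟩
    rw [hfx] at hy
    exact hy
  · intro hE
    have hy : f y ∈ {z | E.r (f x) z} := hE
    rw [← hfx] at hy
    obtain ⟨⟨k, ⟨k₀, hk₀, rfl⟩, hEk⟩, hF⟩ := hy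
    exact ⟨⟨k₀, hk₀, hEk⟩, hF⟩

end SetoidLemmas

section Lift

variable {G Q : Type u} [CommGroup G] [CommGroup Q]

lemma setoidInvariant_comap (π : G →* Q) {E : Setoid Q} (hE : SetoidInvariant E) :
    SetoidInvariant (E.comap π) := by
  intro g x y hxy
  have : E.r (π g * π x) (π g * π y) := hE (π g) (π x) (π y) hxy
  simpa [Setoid.comap_rel, map_mul] using this

lemma splittable_univ : Splittable (Set.univ : Set G) := by
  refine ⟨1, ![⊥, ⊤], ?_, rfl, rfl, ?_, ?_⟩
  · intro i j hij
    fin_cases i <;> fin_cases j <;>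
      simp_all [Matrix.cons_val_zero, Matrix.cons_val_one] <;>
      first | exact le_refl _ | exact bot_le | exact le_top
  · intro i
    fin_cases i
    · intro g x y hxy
      have hxy' : x = y := hxy
      show g * x = g * y
      rw [hxy']
    · intro g x y _
      exact trivial
  · intro i
    fin_cases i
    left
    intro x _
    ext y
    simp only [Set.mem_inter_iff, Set.mem_setOf_eq]
    constructor
    · rintro ⟨-, h⟩
      exact h
    · intro h
      exact ⟨⟨y, Set.mem_univ y, (⊥ : Setoid G).refl y⟩, h⟩

lemma Splittable.lift (π : G →* Q) (K : Set G)
    (hsplit : Splittable (π '' K))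
    (hstep0 : ParallelRel K ⊥ (Setoid.comap π (⊥ : Setoid Q)) ∨
      OrthogonalRel K ⊥ (Setoid.comap π (⊥ : Setoid Q))) :
    Splittable K := by
  obtain ⟨m, E, hmono, h0, hlast, hinv, hsteps⟩ := hsplit
  refine ⟨m + 1, Fin.cons ⊥ (fun i => Setoid.comap π (E i)), ?_, ?_, ?_, ?_, ?_⟩
  · rw [Fin.monotone_iff_le_succ]
    intro i
    refine Fin.cases ?_ ?_ i
    · simp only [Fin.castSucc_zero, Fin.cons_zero]
      exact bot_le
    · intro j
      rw [← Fin.succ_castSucc, Fin.cons_succ, Fin.cons_succ]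
      exact setoid_comap_mono π (hmono (Fin.castSucc_le_succ j))
  · simp
  · rw [← Fin.succ_last, Fin.cons_succ, hlast, setoid_comap_top]
  · intro i
    refine Fin.cases ?_ ?_ i
    · intro g x y hxy
      have hxy' : x = y := hxy
      show g * x = g * y
      rw [hxy']
    · intro j
      rw [Fin.cons_succ]
      exact setoidInvariant_comap π (hinv j)
  · intro i
    refine Fin.cases ?_ ?_ i
    · have e1 : (Fin.cons ⊥ (fun i => Setoid.comap π (E i)) : Fin (m+2) → Setoid G)
          (Fin.castSucc 0) = ⊥ := by simp
      have e2 : (Fin.cons ⊥ (fun i => Setoid.comap π (E i)) : Fin (m+2) → Setoid G)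
          (Fin.succ 0) = Setoid.comap π (E 0) := by rw [Fin.cons_succ]
      rw [e1, e2, h0]
      exact hstep0
    · intro j
      have e1 : (Fin.cons ⊥ (fun i => Setoid.comap π (E i)) : Fin (m+2) → Setoid G)
          (Fin.castSucc (Fin.succ j)) = Setoid.comap π (E (Fin.castSucc j)) := by
        rw [← Fin.succ_castSucc, Fin.cons_succ]
      have e2 : (Fin.cons ⊥ (fun i => Setoid.comap π (E i)) : Fin (m+2) → Setoid G)
          (Fin.succ (Fin.succ j)) = Setoid.comap π (E (Fin.succ j)) := by
        rw [Fin.cons_succ]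
      rw [e1, e2]
      rcases hsteps j with hp | ho
      · exact Or.inl (parallelRel_comap π K _ _ hp)
      · exact Or.inr (orthogonalRel_comap π K _ _ ho)

end Lift

section Descend

variable {G : Type u} [CommGroup G]

lemma IsFactorization.comm {K T : Set G} (h : IsFactorization K T) : IsFactorization T K := by
  rw [isFactorization_iff] at h ⊢
  obtain ⟨hsurj, hinj⟩ := h
  constructor
  · intro g
    obtain ⟨a, ha, b, hb, hab⟩ := hsurj g
    exact ⟨b, hb, a, ha, by rw [mul_comm]; exact hab⟩
  · intro b hb a ha b' hb' a' ha' hab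
    have := hinj a ha b hb a' ha' b' hb' (by rw [mul_comm a b, mul_comm a' b']; exact hab)
    exact ⟨this.2, this.1⟩

lemma descend_fac (N : Subgroup G) {K T : Set G} (hfac : IsFactorization K T)
    (hsat : ∀ n ∈ N, ∀ t ∈ T, n * t ∈ T) :
    IsFactorization ((QuotientGroup.mk' N) '' K) ((QuotientGroup.mk' N) '' T) := by
  rw [isFactorization_iff] at hfac ⊢
  obtain ⟨hsurj, hinj⟩ := hfac
  constructor
  · intro q
    obtain ⟨g, rfl⟩ := QuotientGroup.mk'_surjective N q
    obtain ⟨k, hk, t, ht, hkt⟩ := hsurj g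
    exact ⟨_, ⟨k, hk, rfl⟩, _, ⟨t, ht, rfl⟩, by rw [← map_mul, hkt]⟩
  · rintro _ ⟨k, hk, rfl⟩ _ ⟨t, ht, rfl⟩ _ ⟨k', hk', rfl⟩ _ ⟨t', ht', rfl⟩ heq
    rw [← map_mul, ← map_mul, QuotientGroup.mk'_eq_mk'] at heq
    obtain ⟨n, hn, hn'⟩ := heq
    have h1 : k * (t * n) = k' * t' := by rw [← hn']; rw [mul_assoc]
    have h2 : t * n = n * t := mul_comm _ _
    obtain ⟨hkk, htt⟩ := hinj k hk (t * n) (h2 ▸ hsat n hn t ht) k' hk' t' ht' h1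
    constructor
    · rw [hkk]
    · rw [← htt, QuotientGroup.mk'_eq_mk']
      exact ⟨n, hn, rfl⟩

lemma parallel_step0 (N : Subgroup G) {K : Set G}
    (hsat : ∀ n ∈ N, ∀ k ∈ K, n * k ∈ K) :
    ParallelRel K ⊥ (Setoid.comap (⇑(QuotientGroup.mk' N)) (⊥ : Setoid (G ⧸ N))) := by
  intro x hx
  ext y
  simp only [Set.mem_inter_iff, Set.mem_setOf_eq]
  constructor
  · rintro ⟨-, h⟩
    exact h
  · intro h
    have hxy : QuotientGroup.mk' N x = QuotientGroup.mk' N y := h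
    rw [QuotientGroup.mk'_eq_mk'] at hxy
    obtain ⟨n, hn, rfl⟩ := hxy
    have : x * n = n * x := mul_comm _ _
    exact ⟨⟨x * n, this ▸ hsat n hn x hx, rfl⟩, h⟩

lemma orthogonal_step0 (N : Subgroup G) {K T : Set G} (hfac : IsFactorization K T)
    (hsat : ∀ n ∈ N, ∀ t ∈ T, n * t ∈ T) :
    OrthogonalRel K ⊥ (Setoid.comap (⇑(QuotientGroup.mk' N)) (⊥ : Setoid (G ⧸ N))) := by
  have hinj := (isFactorization_iff.mp hfac).2
  obtain ⟨t₀, ht₀⟩ := hfac.nonempty_right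
  intro x hx
  ext y
  simp only [Set.mem_inter_iff, Set.mem_setOf_eq]
  constructor
  · rintro ⟨⟨k, hk, hky⟩, h⟩
    have hky' : k = y := hky
    subst hky'
    have hxy : QuotientGroup.mk' N x = QuotientGroup.mk' N k := h
    rw [QuotientGroup.mk'_eq_mk'] at hxy
    obtain ⟨n, hn, rfl⟩ := hxy
    have h1 : x * (n * t₀) = (x * n) * t₀ := by rw [mul_assoc]
    obtain ⟨hxk, -⟩ := hinj x hx (n * t₀) (hsat n hn t₀ ht₀) (x * n) hk t₀ ht₀ h1
    exact hxk
  · intro h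
    have h' : x = y := h
    subst h'
    exact ⟨⟨x, hx, rfl⟩, rfl⟩

end Descend

section Main

lemma exists_subgroup_mulEquiv_quotient {G : Type*} [CommGroup G] [Finite G] (N : Subgroup G) :
    ∃ H : Subgroup G, Nonempty (↥H ≃* (G ⧸ N)) := by
  have hG : NeZero ((Monoid.exponent G : ℕ) : ℂ) :=
    ⟨Nat.cast_ne_zero.mpr (Monoid.exponent_ne_zero_of_finite)⟩
  have hQ : NeZero ((Monoid.exponent (G ⧸ N) : ℕ) : ℂ) :=
    ⟨Nat.cast_ne_zero.mpr (Monoid.exponent_ne_zero_of_finite)⟩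
  obtain ⟨eG⟩ := CommGroup.monoidHom_mulEquiv_of_hasEnoughRootsOfUnity G ℂ
  obtain ⟨eQ⟩ := CommGroup.monoidHom_mulEquiv_of_hasEnoughRootsOfUnity (G ⧸ N) ℂ
  set f : ((G ⧸ N) →* ℂˣ) →* (G →* ℂˣ) := MonoidHom.compHom' (QuotientGroup.mk' N)
  have hf : Function.Injective f := by
    intro a b hab
    have key : ∀ q : G ⧸ N, a q = b q := by
      intro q
      obtain ⟨g, rfl⟩ := QuotientGroup.mk_surjective q
      exact DFunLike.congr_fun hab g
    ext q
    exact congrArg Units.val (key q)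
  set g : ((G ⧸ N) →* ℂˣ) →* G := eG.toMonoidHom.comp f
  have hg : Function.Injective g := eG.injective.comp hf
  exact ⟨g.range, ⟨(MonoidHom.ofInjective hg).symm.trans eQ⟩⟩

lemma main_induction : ∀ (n : ℕ) (G : Type u) (_ : CommGroup G) (_ : Finite G),
    Nat.card G ≤ n →
    (∀ N : Subgroup G, SemiHajosGroup (G ⧸ N)) →
    ∀ K : Set G, (∃ B : Set G, IsFactorization K B) → Splittable K := by
  intro n
  induction n with
  | zero =>
    intro G _ _ hcard
    have := Nat.card_pos (α := G)
    omega
  | succ n ih =>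
    intro G _ _ hcard hsemi K hKB
    obtain ⟨B, hfac⟩ := hKB
    by_cases hKuniv : K = Set.univ
    · subst hKuniv
      exact splittable_univ
    have hG : SemiHajosGroup G := (hsemi ⊥).congr (QuotientGroup.quotientBot (G := G))
    -- common machinery, given a nontrivial subgroup N and a factorization K T with
    -- the appropriate saturation
    have key : ∀ (N : Subgroup G), Nontrivial N →
        (∀ M : Subgroup (G ⧸ N), SemiHajosGroup ((G ⧸ N) ⧸ M)) := by
      intro N _ M
      set π := QuotientGroup.mk' N
      set N' := Subgroup.comap π M with hN'
      have hle : N ≤ N' := by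
        intro x hx
        have : π x = 1 := (QuotientGroup.eq_one_iff x).mpr hx
        show π x ∈ M
        rw [this]
        exact one_mem M
      have hMeq : Subgroup.map π N' = M :=
        Subgroup.map_comap_eq_self_of_surjective (QuotientGroup.mk'_surjective N) M
      have iso : (G ⧸ N) ⧸ (Subgroup.map π N') ≃* G ⧸ N' :=
        QuotientGroup.quotientQuotientEquivQuotient N N' hle
      rw [← hMeq]
      exact (hsemi N').congr iso.symm
    have cardkey : ∀ (N : Subgroup G), Nontrivial N → Nat.card (G ⧸ N) ≤ n := by
      intro N hN
      have h1 : Nat.card G = Nat.card (G ⧸ N) * Nat.card N :=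
        Subgroup.card_eq_card_quotient_mul_card_subgroup N
      have h2 : 2 ≤ Nat.card N := Finite.one_lt_card_iff_nontrivial.mpr hN
      have h3 : 0 < Nat.card (G ⧸ N) := Nat.card_pos
      nlinarith
    rcases hG K hKuniv ⟨B, hfac⟩ with hper | ⟨T, hTfac, hTper⟩
    · -- K is periodic
      obtain ⟨p, hpne, hpK⟩ := hper
      set N : Subgroup G := MulAction.stabilizer G K
      have hpN : p ∈ N := hpK
      have hNnt : Nontrivial N :=
        ⟨⟨⟨p, hpN⟩, ⟨1, one_mem N⟩, by simp [Subtype.ext_iff]; exact hpne⟩⟩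
      have hsat : ∀ m ∈ N, ∀ k ∈ K, m * k ∈ K := by
        intro m hm k hk
        have : m • K = K := hm
        rw [← this]
        exact Set.smul_mem_smul_set hk
      set π := QuotientGroup.mk' N
      have hQfac : IsFactorization (⇑π '' K) (⇑π '' B) :=
        (descend_fac N hfac.comm hsat).comm
      have hQsplit : Splittable (⇑π '' K) :=
        ih (G ⧸ N) inferInstance inferInstance (cardkey N hNnt) (key N hNnt)
          (⇑π '' K) ⟨⇑π '' B, hQfac⟩
      exact Splittable.lift π K hQsplit (Or.inl (parallel_step0 N hsat))
    · -- complementer T is periodic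
      obtain ⟨p, hpne, hpT⟩ := hTper
      set N : Subgroup G := MulAction.stabilizer G T
      have hpN : p ∈ N := hpT
      have hNnt : Nontrivial N :=
        ⟨⟨⟨p, hpN⟩, ⟨1, one_mem N⟩, by simp [Subtype.ext_iff]; exact hpne⟩⟩
      have hsat : ∀ m ∈ N, ∀ t ∈ T, m * t ∈ T := by
        intro m hm t ht
        have : m • T = T := hm
        rw [← this]
        exact Set.smul_mem_smul_set ht
      set π := QuotientGroup.mk' N
      have hQfac : IsFactorization (⇑π '' K) (⇑π '' T) := descend_fac N hTfac hsat
      have hQsplit : Splittable (⇑π '' K) :=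
        ih (G ⧸ N) inferInstance inferInstance (cardkey N hNnt) (key N hNnt)
          (⇑π '' K) ⟨⇑π '' T, hQfac⟩
      exact Splittable.lift π K hQsplit (Or.inr (orthogonal_step0 N hTfac hsat))

end Main


/-- If every subgroup of a finite Abelian group `G` has the semi-Hajós
property, then every kaleidoscopical configuration `K ⊆ G` (for the regular action of `G`
on itself) is splittable. -/
theorem stmt19 {G : Type u} [CommGroup G] [Finite G]
    (h : ∀ H : Subgroup G, SemiHajosGroup ↥H) :
    ∀ K : Set G, Kaleidoscopical K → Splittable K := by
  intro K hK
  have hsemi : ∀ N : Subgroup G, SemiHajosGroup (G ⧸ N) := by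
    intro N
    obtain ⟨H, ⟨e⟩⟩ := exists_subgroup_mulEquiv_quotient N
    exact (h H).congr e
  exact main_induction (Nat.card G) G inferInstance inferInstance le_rfl hsemi K
    hK.exists_factorization
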